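/- Let h, h' : M → ℝ³ be continuous on a topological space M with |h(k)| ≠ |h'(k)| for all k, and suppose |h(k)| > |h'(k)| for all k (positive Pfaffian case). Then the family H(k) = Σᵢ hᵢ(k)Sᵢ + Σᵢ hᵢ'(k)Tᵢ can be continuously deformed, through families of invertible Hermitian matrices, to the family H̃(k) = Σᵢ (hᵢ(k)/|h(k)|) Sᵢ; explicitly, H_t(k) = Σᵢ hᵢ(k)·((1−t) + t/|h(k)|)·Sᵢ + (1−t) Σᵢ hᵢ'(k)Tᵢ is Hermitian and invertible for all t ∈ [0,1]. -/

import Mathlib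

open Matrix Complex

/-- The self-dual generators S₁ = diag(τ₁,−τ₁), S₂ = diag(τ₂,τ₂), S₃ = diag(τ₃,−τ₃). -/
noncomputable def S : Fin 3 → Matrix (Fin 4) (Fin 4) ℂ
  | 0 => !![0, 1, 0, 0; 1, 0, 0, 0; 0, 0, 0, -1; 0, 0, -1, 0]
  | 1 => !![0, -Complex.I, 0, 0; Complex.I, 0, 0, 0; 0, 0, 0, -Complex.I; 0, 0, Complex.I, 0]
  | 2 => !![1, 0, 0, 0; 0, -1, 0, 0; 0, 0, -1, 0; 0, 0, 0, 1]

/-- The anti-self-dual generators T₁ = [[0,iτ₂],[−iτ₂,0]], T₂ = [[0,τ₂],[τ₂,0]], T₃ = diag(I₂,−I₂). -/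
noncomputable def T : Fin 3 → Matrix (Fin 4) (Fin 4) ℂ
  | 0 => !![0, 0, 0, 1; 0, 0, -1, 0; 0, -1, 0, 0; 1, 0, 0, 0]
  | 1 => !![0, 0, 0, -Complex.I; 0, 0, Complex.I, 0; 0, -Complex.I, 0, 0; Complex.I, 0, 0, 0]
  | 2 => !![1, 0, 0, 0; 0, 1, 0, 0; 0, 0, -1, 0; 0, 0, 0, -1]

noncomputable def Hmat (a b : Fin 3 → ℝ) : Matrix (Fin 4) (Fin 4) ℂ :=
  !![(a 2 : ℂ) + (b 2 : ℂ), (a 0 : ℂ) - (a 1 : ℂ) * Complex.I, 0, (b 0 : ℂ) - (b 1 : ℂ) * Complex.I;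
     (a 0 : ℂ) + (a 1 : ℂ) * Complex.I, -(a 2 : ℂ) + (b 2 : ℂ), -(b 0 : ℂ) + (b 1 : ℂ) * Complex.I, 0;
     0, -(b 0 : ℂ) - (b 1 : ℂ) * Complex.I, -(a 2 : ℂ) - (b 2 : ℂ), -(a 0 : ℂ) - (a 1 : ℂ) * Complex.I;
     (b 0 : ℂ) + (b 1 : ℂ) * Complex.I, 0, -(a 0 : ℂ) + (a 1 : ℂ) * Complex.I, (a 2 : ℂ) - (b 2 : ℂ)]

set_option maxHeartbeats 1600000 in
lemma H_eq (a b : Fin 3 → ℝ) :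
    ∑ i : Fin 3, ((a i : ℝ) : ℂ) • S i + ∑ i : Fin 3, ((b i : ℝ) : ℂ) • T i = Hmat a b := by
  ext i j
  fin_cases i <;> fin_cases j <;>
    simp [Fin.sum_univ_three, S, T, Hmat, Matrix.add_apply, Matrix.smul_apply, Matrix.vecHead, Matrix.vecTail] <;> ring

lemma Hmat_herm (a b : Fin 3 → ℝ) : (Hmat a b).IsHermitian := by
  unfold Matrix.IsHermitian
  ext i j
  fin_cases i <;> fin_cases j <;>
    simp [Hmat, Matrix.conjTranspose_apply, Complex.conj_ofReal] <;> ring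

lemma Hmat_mul (a b : Fin 3 → ℝ) :
    Hmat a b * Hmat a (-b) =
      ((a 0 ^ 2 + a 1 ^ 2 + a 2 ^ 2 - (b 0 ^ 2 + b 1 ^ 2 + b 2 ^ 2) : ℝ) : ℂ) • 1 := by
  ext i j
  fin_cases i <;> fin_cases j <;>
    (simp [Hmat, Matrix.mul_apply, Fin.sum_univ_four, Matrix.one_apply, Matrix.smul_apply] <;>
      ring_nf <;> simp [Complex.I_sq] <;> ring_nf)

lemma norm_sq_eq (x : EuclideanSpace ℝ (Fin 3)) : ‖x‖ ^ 2 = x 0 ^ 2 + x 1 ^ 2 + x 2 ^ 2 := by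
  rw [EuclideanSpace.norm_eq, Real.sq_sqrt (by positivity)]
  simp [Fin.sum_univ_three, sq_abs]


/-- in the positive Pfaffian case |h(k)| > |h'(k)|, the family
H(k) = Σ hᵢ(k)Sᵢ + Σ hᵢ'(k)Tᵢ deforms through invertible Hermitian matrices, via
H_t(k) = Σ hᵢ(k)((1−t)+t/|h(k)|)Sᵢ + (1−t) Σ hᵢ'(k)Tᵢ, to H̃(k) = Σ (hᵢ(k)/|h(k)|)Sᵢ. -/
theorem deformation_to_self_dual {M : Type*} [TopologicalSpace M]
    (h h' : M → EuclideanSpace ℝ (Fin 3))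
    (hc : Continuous h) (hc' : Continuous h')
    (gap : ∀ k, ‖h k‖ ≠ ‖h' k‖) (pos : ∀ k, ‖h' k‖ < ‖h k‖) :
    ∀ t ∈ Set.Icc (0 : ℝ) 1, ∀ k : M,
      (∑ i : Fin 3, ((h k i * ((1 - t) + t / ‖h k‖) : ℝ) : ℂ) • S i +
          ((1 - t : ℝ) : ℂ) • ∑ i : Fin 3, ((h' k i : ℝ) : ℂ) • T i).IsHermitian ∧
      IsUnit (∑ i : Fin 3, ((h k i * ((1 - t) + t / ‖h k‖) : ℝ) : ℂ) • S i +
          ((1 - t : ℝ) : ℂ) • ∑ i : Fin 3, ((h' k i : ℝ) : ℂ) • T i) := by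
  rintro t ⟨ht0, ht1⟩ k
  have hn' : (0 : ℝ) ≤ ‖h' k‖ := norm_nonneg _
  have hn : (0 : ℝ) < ‖h k‖ := lt_of_le_of_lt hn' (pos k)
  set c : ℝ := (1 - t) + t / ‖h k‖ with hcdef
  set a : Fin 3 → ℝ := fun i => h k i * c with hadef
  set b : Fin 3 → ℝ := fun i => (1 - t) * h' k i with hbdef
  have hrw : (∑ i : Fin 3, ((h k i * c : ℝ) : ℂ) • S i +
      ((1 - t : ℝ) : ℂ) • ∑ i : Fin 3, ((h' k i : ℝ) : ℂ) • T i) = Hmat a b := by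
    rw [← H_eq a b, Finset.smul_sum]
    congr 1
    all_goals
      refine Finset.sum_congr rfl fun i _ => ?_
      simp only [hadef, hbdef, smul_smul]
      norm_cast
  rw [hrw]
  refine ⟨Hmat_herm a b, ?_⟩
  -- key inequality
  have hcn : c * ‖h k‖ = (1 - t) * ‖h k‖ + t := by
    field_simp [hcdef]
    rw [hcdef, add_mul, div_mul_cancel₀ _ hn.ne']
    ring
  clear_value c
  have hlt : (1 - t) * ‖h' k‖ < c * ‖h k‖ := by
    rw [hcn]
    rcases eq_or_lt_of_le ht0 with rfl | ht0'
    · simpa using pos k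
    · nlinarith [pos k, mul_nonneg (sub_nonneg.2 ht1) (le_of_lt (lt_of_le_of_lt hn' (pos k)))]
  have hbnn : 0 ≤ (1 - t) * ‖h' k‖ := mul_nonneg (sub_nonneg.2 ht1) hn'
  have hd : a 0 ^ 2 + a 1 ^ 2 + a 2 ^ 2 - (b 0 ^ 2 + b 1 ^ 2 + b 2 ^ 2) ≠ 0 := by
    have ha2 : a 0 ^ 2 + a 1 ^ 2 + a 2 ^ 2 = (c * ‖h k‖) ^ 2 := by
      have hsq := norm_sq_eq (h k)
      simp only [hadef]
      linear_combination (-(c ^ 2)) * hsq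
    have hb2 : b 0 ^ 2 + b 1 ^ 2 + b 2 ^ 2 = ((1 - t) * ‖h' k‖) ^ 2 := by
      have hsq := norm_sq_eq (h' k)
      simp only [hbdef]
      linear_combination (-((1 - t) ^ 2)) * hsq
    rw [ha2, hb2]
    have : ((1 - t) * ‖h' k‖) ^ 2 < (c * ‖h k‖) ^ 2 := by nlinarith [hlt, hbnn]
    exact sub_ne_zero.2 (ne_of_gt this)
  set d : ℝ := a 0 ^ 2 + a 1 ^ 2 + a 2 ^ 2 - (b 0 ^ 2 + b 1 ^ 2 + b 2 ^ 2) with hddef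
  have hdC : (d : ℂ) ≠ 0 := by exact_mod_cast hd
  have hinv : Hmat a b * ((d : ℂ)⁻¹ • Hmat a (-b)) = 1 := by
    rw [Matrix.mul_smul, Hmat_mul, ← hddef, smul_smul, inv_mul_cancel₀ hdC, one_smul]
  have := invertibleOfRightInverse _ _ hinv
  exact isUnit_of_invertible _
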